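/- Let D be a triangulated category with a bounded t-structure and S a t-exact triangulated subcategory (i.e., a triangulated subcategory closed under the truncation σ^{≤0}). Then S is thick, i.e., closed under direct summands. -/

import Mathlib

open CategoryTheory Limits Pretriangulated ZeroObject

universe v u

namespace Paper

variable {C : Type u} [Category.{v} C] [Preadditive C] [HasZeroObject C]
  [HasShift C ℤ] [∀ n : ℤ, (CategoryTheory.shiftFunctor C n).Additive] [Pretriangulated C]
  [HasBinaryBiproducts C]

/-- A class of objects closed under isomorphism. -/
def ClosedIso (P : C → Prop) : Prop := ∀ ⦃X Y : C⦄, (X ≅ Y) → P X → P Y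

/-- A class of objects closed under extensions. -/
def ExtClosed (P : C → Prop) : Prop :=
  ∀ T : Triangle C, T ∈ (distTriang C) → P T.obj₁ → P T.obj₃ → P T.obj₂

/-- A suspended subcategory: additive (iso-closed, contains 0, closed under finite sums via
extensions), closed under the suspension `Σ = ⟦1⟧` and under extensions. -/
structure Suspended (P : C → Prop) : Prop where
  iso : ClosedIso P
  zero : P 0
  shift : ∀ ⦃X : C⦄, P X → P (X⟦(1:ℤ)⟧)
  ext : ExtClosed P

/-- A t-structure `(L, G) = (D^{≤0}, D^{>0})`: Hom-orthogonality, every object is an extension,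
`L` is suspended; both classes are closed under isomorphism. -/
structure IsTStr (L G : C → Prop) : Prop where
  isoL : ClosedIso L
  isoG : ClosedIso G
  zeroL : L 0
  homZero : ∀ ⦃X Y : C⦄, L X → G Y → ∀ f : X ⟶ Y, f = 0
  trunc : ∀ X : C, ∃ (A B : C) (f : A ⟶ X) (g : X ⟶ B) (h : B ⟶ A⟦(1:ℤ)⟧),
    Triangle.mk f g h ∈ (distTriang C) ∧ L A ∧ G B
  shiftL : ∀ ⦃X : C⦄, L X → L (X⟦(1:ℤ)⟧)
  extL : ExtClosed L

/-- The right orthogonal `U^{⊥₀}` of a class of objects. -/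
def rightOrth (U : C → Prop) (Y : C) : Prop := ∀ X : C, U X → ∀ f : X ⟶ Y, f = 0

/-- `Y ∈ P^{⊥_{≤ m}}`: `Hom(P, Σ^i Y) = 0` for all `i ≤ m`. -/
def perpLe (P : C) (m : ℤ) (Y : C) : Prop := ∀ i : ℤ, i ≤ m → ∀ f : P ⟶ Y⟦i⟧, f = 0

/-- `Y ∈ P^{⊥_{> m}}`: `Hom(P, Σ^i Y) = 0` for all `i > m`. -/
def perpGt (P : C) (m : ℤ) (Y : C) : Prop := ∀ i : ℤ, m < i → ∀ f : P ⟶ Y⟦i⟧, f = 0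

/-- `Y ∈ P^{⊥_ℤ}`: `Hom(P, Σ^i Y) = 0` for all integers `i`. -/
def perpZ (P : C) (Y : C) : Prop := ∀ i : ℤ, ∀ f : P ⟶ Y⟦i⟧, f = 0

/-- `X ∈ ^{⊥_{>0}}P`: `Hom(X, Σ^i P) = 0` for all `i > 0`. -/
def leftPerpGt0 (P : C) (X : C) : Prop := ∀ i : ℤ, 0 < i → ∀ f : X ⟶ P⟦i⟧, f = 0

/-- `susp(P)`, the smallest suspended subcategory containing `P`. -/
def suspObj (P : C) (X : C) : Prop := ∀ U : C → Prop, Suspended U → U P → U X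

/-- An additive subcategory closed under direct summands. -/
structure AddSub (U : C → Prop) : Prop where
  iso : ClosedIso U
  zero : U 0
  biprod : ∀ X Y : C, U X → U Y → U (X ⊞ Y)
  summand : ∀ X Y : C, U (X ⊞ Y) → U X

/-- `add(P)`: the additive closure of `P` (finite direct sums of direct summands). -/
def addObj (P : C) (X : C) : Prop := ∀ U : C → Prop, AddSub U → U P → U X

/-- A thick triangulated subcategory. -/
structure ThickSub (U : C → Prop) : Prop where
  iso : ClosedIso U
  zero : U 0
  shift : ∀ ⦃X : C⦄, U X → ∀ n : ℤ, U (X⟦n⟧)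
  ext : ExtClosed U
  summand : ∀ X Y : C, U (X ⊞ Y) → U X

/-- `thick(P)`: the smallest thick subcategory containing `P`. -/
def thickObj (P : C) (X : C) : Prop := ∀ U : C → Prop, ThickSub U → U P → U X

/-- A triangulated subcategory (iso-closed, shift-closed both ways, extension-closed). -/
structure TriangSub (U : C → Prop) : Prop where
  iso : ClosedIso U
  zero : U 0
  shift : ∀ ⦃X : C⦄, U X → ∀ n : ℤ, U (X⟦n⟧)
  ext : ExtClosed U

/-- `P` is presilting: `Hom(P, Σ^n P) = 0` for all `n > 0`. -/
def Presilting (P : C) : Prop := ∀ n : ℤ, 0 < n → ∀ f : P ⟶ P⟦n⟧, f = 0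

/-- `P` is partial silting: `(susp(P), P^{⊥_{≤0}})` is a t-structure and
`susp(P) ⊆ P^{⊥_{>0}}`. -/
def PartialSilting (P : C) : Prop :=
  IsTStr (suspObj P) (perpLe P 0) ∧ ∀ X : C, suspObj P X → perpGt P 0 X

/-- `S` is silting: partial silting with `susp(S) = S^{⊥_{>0}}`. -/
def Silting (S : C) : Prop :=
  PartialSilting S ∧ ∀ X : C, suspObj S X ↔ perpGt S 0 X

/-- `X ∈ D^{≤ n}` for the t-structure with aisle `L`. -/
def DLe (L : C → Prop) (n : ℤ) (X : C) : Prop := L (X⟦n⟧)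

/-- `X ∈ D^{> m}` for the t-structure with co-aisle `G`. -/
def DGt (G : C → Prop) (m : ℤ) (X : C) : Prop := G (X⟦m⟧)

/-- The t-structure `(L, G)` is bounded. -/
def BoundedTStr (L G : C → Prop) : Prop :=
  ∀ X : C, (∃ n : ℤ, DLe L n X) ∧ (∃ m : ℤ, DGt G m X)

/-- `H` is (a choice of) the `i`-th cohomology `H^i(X) = σ^{≤ i} σ^{> i-1} X` of `X` with
respect to the t-structure `(L, G)`, expressed by the two truncation triangles. -/
def IsCohomAt (L G : C → Prop) (i : ℤ) (X H : C) : Prop :=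
  ∃ (A B B' : C) (f : A ⟶ X) (g : X ⟶ B) (h : B ⟶ A⟦(1:ℤ)⟧)
    (f' : H ⟶ B) (g' : B ⟶ B') (h' : B' ⟶ H⟦(1:ℤ)⟧),
    Triangle.mk f g h ∈ (distTriang C) ∧ DLe L (i-1) A ∧ DGt G (i-1) B ∧
    Triangle.mk f' g' h' ∈ (distTriang C) ∧ DLe L i H ∧ DGt G i B'

/-- The heart `D^0 = D^{≤0} ∩ D^{>-1}` of the t-structure `(L, G)`. -/
def Heart (L G : C → Prop) (X : C) : Prop := L X ∧ DGt G (-1) X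

/-- A t-exact subcategory: a triangulated subcategory closed under the truncation `σ^{≤0}`
of the t-structure `(L, G)`. -/
def TExactSub (L G : C → Prop) (S : C → Prop) : Prop :=
  TriangSub S ∧
    ∀ (X A B : C) (f : A ⟶ X) (g : X ⟶ B) (h : B ⟶ A⟦(1:ℤ)⟧),
      S X → Triangle.mk f g h ∈ (distTriang C) → L A → G B → S A


/-- The class of objects `U` admits coreflections: every object has a couniversal morphism
from `U`, i.e. the inclusion of `U` admits a right adjoint. -/
def HasCoreflections (U : C → Prop) : Prop :=
  ∀ X : C, ∃ (A : C) (ε : A ⟶ X), U A ∧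
    ∀ A' : C, U A' → ∀ g : A' ⟶ X, ∃! g' : A' ⟶ A, g' ≫ ε = g

/-- `X` is a `2_S`-term object: `X ∈ add(S) * Σ add(S)`. -/
def TwoTerm (S X : C) : Prop :=
  ∃ (S₁ S₀ : C) (f : S₁ ⟶ S₀) (g : S₀ ⟶ X) (h : X ⟶ S₁⟦(1:ℤ)⟧),
    Triangle.mk f g h ∈ (distTriang C) ∧ addObj S S₁ ∧ addObj S S₀

/-- `X` is indecomposable. -/
def Indec (X : C) : Prop :=
  ¬ IsZero X ∧ ∀ Y Z : C, (X ≅ Y ⊞ Z) → IsZero Y ∨ IsZero Z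

/-- `add(A)` is contravariantly finite: every object admits a right `add(A)`-approximation. -/
def ContravFinAdd (A : C) : Prop :=
  ∀ X : C, ∃ (Q : C) (q : Q ⟶ X), addObj A Q ∧
    ∀ Q' : C, addObj A Q' → ∀ g : Q' ⟶ X, ∃ g' : Q' ⟶ Q, g' ≫ q = g

/-- `S` is a bounded silting object. -/
def BoundedSilting (S : C) : Prop :=
  Silting S ∧ BoundedTStr (suspObj S) (perpLe S 0)

/-- Hom-finiteness of `C` over a field `k`. -/
def HomFinite (k : Type w) [Field k] [Linear k C] : Prop :=
  ∀ X Y : C, FiniteDimensional k (X ⟶ Y)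

/-- The Krull–Schmidt property: every object is a finite direct sum of objects with local
endomorphism rings. -/
def KrullSchmidt : Prop :=
  ∀ X : C, ∃ l : List C, (∀ Y ∈ l, IsLocalRing (End Y)) ∧
    Nonempty (X ≅ l.foldr (· ⊞ ·) 0)

/-- A wide subcategory of the heart of the t-structure `(L, G)`: closed under isomorphisms,
extensions, kernels and cokernels (the latter two expressed via cones and cohomology). -/
structure HeartWide (L G W : C → Prop) : Prop where
  sub : ∀ ⦃X : C⦄, W X → Heart L G X
  iso : ClosedIso W
  ext : ∀ (X Y Z : C) (f : X ⟶ Y) (g : Y ⟶ Z) (h : Z ⟶ X⟦(1:ℤ)⟧),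
    W X → W Z → Heart L G Y → Triangle.mk f g h ∈ (distTriang C) → W Y
  kerCoker : ∀ (X Y Z : C) (f : X ⟶ Y) (g : Y ⟶ Z) (h : Z ⟶ X⟦(1:ℤ)⟧),
    W X → W Y → Triangle.mk f g h ∈ (distTriang C) →
    (∀ K : C, IsCohomAt L G (-1) Z K → W K) ∧ (∀ Q : C, IsCohomAt L G 0 Z Q → W Q)

/-- The subgroup of relations defining `K₀` of the thick subcategory `S`. -/
def K0Rel (S : C → Prop) : AddSubgroup (FreeAbelianGroup C) :=
  AddSubgroup.closure
    {x | (∃ X : C, ¬ S X ∧ x = FreeAbelianGroup.of X) ∨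
      ∃ T : Triangle C, T ∈ (distTriang C) ∧ S T.obj₁ ∧ S T.obj₂ ∧ S T.obj₃ ∧
        x = FreeAbelianGroup.of T.obj₂ - FreeAbelianGroup.of T.obj₁
          - FreeAbelianGroup.of T.obj₃}

/-- The Grothendieck group of the (thick) subcategory `S`. -/
abbrev K0 (S : C → Prop) := FreeAbelianGroup C ⧸ K0Rel S

/-- The class `[X]` in the Grothendieck group. -/
def K0cls (S : C → Prop) (X : C) : K0 S :=
  QuotientAddGroup.mk (FreeAbelianGroup.of X)

/-- A `2_S`-term presilting sequence `(X₁, …, X_t)` in the ambient subcategory `Amb` with respect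
to the silting object `S`, defined recursively: the last term `X` is an indecomposable `2_S`-term
presilting object, and the truncated sequence is a `2_{σ^{>0}_X T}`-term presilting sequence in
`Amb ∩ X^{⊥_ℤ}`, where `T = X ⊕ Q` is the Bongartz completion of `X`. -/
inductive PresiltSeq : (C → Prop) → C → List C → Prop
  | nil (Amb : C → Prop) (S : C) : PresiltSeq Amb S []
  | cons (Amb : C → Prop) (S X : C) (l : List C)
      (hX : Amb X) (h2 : TwoTerm S X) (hpre : Presilting X) (hind : Indec X)
      -- Bongartz completion `T = X ⊞ Q`, via an approximation triangle `S → Q → X₀ → ΣS`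
      (Q X₀ : C) (i : S ⟶ Q) (p : Q ⟶ X₀) (β : X₀ ⟶ S⟦(1:ℤ)⟧)
      (hB : Triangle.mk i p β ∈ (distTriang C)) (hX₀ : addObj X X₀)
      (happrox : ∀ X' : C, addObj X X' → ∀ g : X' ⟶ S⟦(1:ℤ)⟧, ∃ g', g' ≫ β = g)
      -- the truncation `T' = σ^{>0}_X (X ⊞ Q)`
      (T' A : C) (f : A ⟶ X ⊞ Q) (g : X ⊞ Q ⟶ T') (h : T' ⟶ A⟦(1:ℤ)⟧)
      (hTr : Triangle.mk f g h ∈ (distTriang C)) (hA : suspObj X A) (hT' : perpLe X 0 T')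
      (hrest : PresiltSeq (fun Y => Amb Y ∧ perpZ X Y) T' l) :
      PresiltSeq Amb S (l ++ [X])


/-! ### Auxiliary material for Statement 2 -/

/-- Composition of shifts, with a chosen total degree. -/
noncomputable def shiftIso' (X : C) (a b c : ℤ) (h : a + b = c) : (X⟦a⟧)⟦b⟧ ≅ X⟦c⟧ :=
  ((shiftFunctorAdd' C a b c h).app X).symm

/-- The zero shift. -/
noncomputable def shiftZeroIso (X : C) : X⟦(0:ℤ)⟧ ≅ X := (shiftFunctorZero C ℤ).app X

/-- Shift functors commute with binary biproducts. -/
noncomputable def biprodShiftIso (X Y : C) (n : ℤ) : (X ⊞ Y)⟦n⟧ ≅ X⟦n⟧ ⊞ Y⟦n⟧ where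
  hom := biprod.lift (biprod.fst⟦n⟧') (biprod.snd⟦n⟧')
  inv := biprod.desc (biprod.inl⟦n⟧') (biprod.inr⟦n⟧')
  hom_inv_id := by
    rw [biprod.lift_desc, ← Functor.map_comp, ← Functor.map_comp, ← Functor.map_add,
      biprod.total, CategoryTheory.Functor.map_id]
  inv_hom_id := by ext <;> simp [← Functor.map_comp]

/-- A biproduct with the zero object. -/
noncomputable def biprodZeroIso (A : C) : A ⊞ (0 : C) ≅ A where
  hom := biprod.fst
  inv := biprod.inl
  hom_inv_id := by
    apply biprod.hom_ext'
    · simp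
    · exact (isZero_zero C).eq_of_src _ _
  inv_hom_id := by simp

/-- A binary biproduct is a product over `WalkingPair`. -/
noncomputable def biprodPiIso (f : WalkingPair → C) :
    (f WalkingPair.left ⊞ f WalkingPair.right) ≅ ∏ᶜ f where
  hom := Pi.lift (fun j => WalkingPair.casesOn j biprod.fst biprod.snd)
  inv := biprod.lift (Pi.π f WalkingPair.left) (Pi.π f WalkingPair.right)
  hom_inv_id := by
    apply biprod.hom_ext
    · simp
    · simp
  inv_hom_id := by
    apply Limits.Pi.hom_ext
    rintro (_ | _) <;> simp

/-- The binary biproduct of two triangles. -/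
@[simps!]
noncomputable def biprodTriangle (T₁ T₂ : Triangle C) : Triangle C :=
  Triangle.mk (biprod.map T₁.mor₁ T₂.mor₁) (biprod.map T₁.mor₂ T₂.mor₂)
    (biprod.desc (T₁.mor₃ ≫ biprod.inl⟦(1:ℤ)⟧') (T₂.mor₃ ≫ biprod.inr⟦(1:ℤ)⟧'))

/-- First projection from a biproduct triangle. -/
@[simps]
noncomputable def biprodTriangleπ₁ (T₁ T₂ : Triangle C) : biprodTriangle T₁ T₂ ⟶ T₁ where
  hom₁ := biprod.fst
  hom₂ := biprod.fst
  hom₃ := biprod.fst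
  comm₁ := by dsimp [biprodTriangle, Triangle.mk]; simp
  comm₂ := by simp [biprodTriangle, Triangle.mk]
  comm₃ := by
    dsimp [biprodTriangle, Triangle.mk]
    apply biprod.hom_ext'
    · simp [← Functor.map_comp]
    · simp [← Functor.map_comp]

/-- Second projection from a biproduct triangle. -/
@[simps]
noncomputable def biprodTriangleπ₂ (T₁ T₂ : Triangle C) : biprodTriangle T₁ T₂ ⟶ T₂ where
  hom₁ := biprod.snd
  hom₂ := biprod.snd
  hom₃ := biprod.snd
  comm₁ := by dsimp [biprodTriangle, Triangle.mk]; simp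
  comm₂ := by simp [biprodTriangle, Triangle.mk]
  comm₃ := by
    dsimp [biprodTriangle, Triangle.mk]
    apply biprod.hom_ext'
    · simp [← Functor.map_comp]
    · simp [← Functor.map_comp]

/-- The binary biproduct of two distinguished triangles is distinguished. -/
lemma biprodTriangle_distinguished (T₁ T₂ : Triangle C)
    (h₁ : T₁ ∈ distTriang C) (h₂ : T₂ ∈ distTriang C) :
    biprodTriangle T₁ T₂ ∈ distTriang C := by
  have hF : ∀ j : WalkingPair,
      (fun j => WalkingPair.casesOn j T₁ T₂ : WalkingPair → Triangle C) j ∈ distTriang C := by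
    rintro (_ | _) <;> assumption
  let φ : biprodTriangle T₁ T₂ ⟶ productTriangle (fun j => WalkingPair.casesOn j T₁ T₂) :=
    productTriangle.lift _
      (fun j => WalkingPair.casesOn j (biprodTriangleπ₁ T₁ T₂) (biprodTriangleπ₂ T₁ T₂))
  have e₁ : φ.hom₁ =
      (biprodPiIso (fun j => ((WalkingPair.casesOn j T₁ T₂ : Triangle C)).obj₁)).hom := by
    apply Limits.Pi.hom_ext
    rintro (_ | _) <;> simp [φ, biprodPiIso] <;> erw [Pi.lift_π]
  have e₂ : φ.hom₂ =
      (biprodPiIso (fun j => ((WalkingPair.casesOn j T₁ T₂ : Triangle C)).obj₂)).hom := by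
    apply Limits.Pi.hom_ext
    rintro (_ | _) <;> simp [φ, biprodPiIso] <;> erw [Pi.lift_π]
  have e₃ : φ.hom₃ =
      (biprodPiIso (fun j => ((WalkingPair.casesOn j T₁ T₂ : Triangle C)).obj₃)).hom := by
    apply Limits.Pi.hom_ext
    rintro (_ | _) <;> simp [φ, biprodPiIso] <;> erw [Pi.lift_π]
  have i₁ : IsIso φ.hom₁ := by rw [e₁]; exact Iso.isIso_hom _
  have i₂ : IsIso φ.hom₂ := by rw [e₂]; exact Iso.isIso_hom _
  have i₃ : IsIso φ.hom₃ := by rw [e₃]; exact Iso.isIso_hom _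
  have : IsIso φ := by
    apply Triangle.isIso_of_isIsos
    all_goals infer_instance
  exact isomorphic_distinguished _ (productTriangle_distinguished _ hF) _ (asIso φ)

section TStructureLemmas

variable {L G : C → Prop}

/-- An object right-orthogonal to the aisle lies in the co-aisle. -/
lemma G_of_orth (ht : IsTStr L G) {Y : C}
    (hY : ∀ P : C, L P → ∀ f : P ⟶ Y, f = 0) : G Y := by
  obtain ⟨A, B, a, b, w, hT, hA, hB⟩ := ht.trunc Y
  have ha : a = 0 := hY A hA a
  obtain ⟨u, hu⟩ := Triangle.coyoneda_exact₁ _ hT (𝟙 (A⟦(1:ℤ)⟧)) (by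
    erw [Category.id_comp]
    show a⟦(1:ℤ)⟧' = 0
    rw [ha, Functor.map_zero])
  have hu0 : u = 0 := ht.homZero (ht.shiftL hA) hB u
  have hid : 𝟙 (A⟦(1:ℤ)⟧) = 0 := by rw [hu, hu0, zero_comp]; rfl
  have hzA : IsZero A := by
    rw [IsZero.iff_id_eq_zero]
    apply (shiftFunctor C (1:ℤ)).map_injective
    rw [CategoryTheory.Functor.map_id, Functor.map_zero, hid]
  have : IsIso (Triangle.mk a b w).mor₂ := by
    rw [← Triangle.isZero₁_iff_isIso₂ _ hT]
    exact hzA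
  exact ht.isoG (asIso (Triangle.mk a b w).mor₂).symm hB

/-- The co-aisle is closed under extensions. -/
lemma GExt (ht : IsTStr L G) (T : Triangle C) (hT : T ∈ distTriang C)
    (hG₁ : G T.obj₁) (hG₃ : G T.obj₃) : G T.obj₂ :=
  G_of_orth ht (fun P hP f => by
    obtain ⟨u, hu⟩ := Triangle.coyoneda_exact₂ _ hT f (ht.homZero hP hG₃ _)
    rw [hu, ht.homZero hP hG₁ u, zero_comp])

/-- The co-aisle is closed under the negative shift. -/
lemma Gneg (ht : IsTStr L G) {Y : C} (hY : G Y) : G (Y⟦(-1:ℤ)⟧) :=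
  G_of_orth ht (fun P hP f => by
    have e : (Y⟦(-1:ℤ)⟧)⟦(1:ℤ)⟧ ≅ Y := shiftIso' Y (-1) 1 0 (by ring) ≪≫ shiftZeroIso Y
    have h0 : (shiftFunctor C (1:ℤ)).map f ≫ e.hom = 0 := ht.homZero (ht.shiftL hP) hY _
    have h1 : (shiftFunctor C (1:ℤ)).map f = 0 := by
      rw [← Category.comp_id ((shiftFunctor C (1:ℤ)).map f), ← e.hom_inv_id,
        ← Category.assoc, h0, zero_comp]
    exact (shiftFunctor C (1:ℤ)).map_injective (by rw [h1, Functor.map_zero]))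

lemma DGt_mono (ht : IsTStr L G) {X : C} {a b : ℤ} (h : a ≤ b) (hX : DGt G b X) :
    DGt G a X := by
  obtain ⟨n, rfl⟩ := Int.le.dest h
  clear h
  revert hX
  induction n with
  | zero => intro hX; simpa using hX
  | succ n ih =>
      intro hX
      have h1 : G (X⟦a + ((n:ℤ)+1)⟧) := by
        show G (X⟦a + (((n+1:ℕ)):ℤ)⟧)
        push_cast
        exact_mod_cast hX
      have h2 := Gneg ht h1
      exact ih (ht.isoG (shiftIso' X (a + ((n:ℤ)+1)) (-1) (a + (n:ℤ)) (by ring)) h2)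

lemma DLe_mono (ht : IsTStr L G) {X : C} {a b : ℤ} (h : a ≤ b) (hX : DLe L a X) :
    DLe L b X := by
  obtain ⟨n, rfl⟩ := Int.le.dest h
  clear h
  induction n with
  | zero => simpa using hX
  | succ n ih =>
      have h1 : L ((X⟦a + (n:ℤ)⟧)⟦(1:ℤ)⟧) := ht.shiftL ih
      have h2 : L (X⟦a + ((n:ℤ)+1)⟧) :=
        ht.isoL (shiftIso' X (a + (n:ℤ)) 1 (a + ((n:ℤ)+1)) (by ring)) h1
      show L (X⟦a + (((n+1:ℕ)):ℤ)⟧)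
      push_cast
      exact_mod_cast h2

/-- The Eilenberg-style swindle: a heart summand of an object of `S` lies in `S`. -/
lemma heartSummand {S : C → Prop} (ht : IsTStr L G) (hS : TExactSub L G S)
    {X Y : C} (hZ : S (X ⊞ Y)) (hL : L X) (hG : G (X⟦(-1:ℤ)⟧)) : S X := by
  have hT₁ : ((binaryBiproductTriangle (X⟦(-1:ℤ)⟧) X).rotate.rotate) ∈ distTriang C :=
    rot_of_distTriang _ (rot_of_distTriang _
      (binaryBiproductTriangle_distinguished (X⟦(-1:ℤ)⟧) X))
  have hSum := biprodTriangle_distinguished _ _ hT₁ (contractible_distinguished Y)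
  have e2 : (X ⊞ Y) ≅ ((X⟦(-1:ℤ)⟧)⟦(1:ℤ)⟧ ⊞ Y) :=
    biprod.mapIso (shiftIso' X (-1) 1 0 (by ring) ≪≫ shiftZeroIso X).symm (Iso.refl Y)
  have hS2 : S ((X⟦(-1:ℤ)⟧)⟦(1:ℤ)⟧ ⊞ Y) := hS.1.iso e2 hZ
  have hS3 : S (((X⟦(-1:ℤ)⟧ ⊞ X)⟦(1:ℤ)⟧) ⊞ (0 : C)) :=
    hS.1.ext _ (rot_of_distTriang _ hSum) hS2 (hS.1.shift hZ 1)
  have hS4 : S ((X⟦(-1:ℤ)⟧ ⊞ X)⟦(1:ℤ)⟧) := hS.1.iso (biprodZeroIso _) hS3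
  have hS5 : S (X⟦(-1:ℤ)⟧ ⊞ X) :=
    hS.1.iso (shiftIso' (X⟦(-1:ℤ)⟧ ⊞ X) 1 (-1) 0 (by ring) ≪≫ shiftZeroIso _)
      (hS.1.shift hS4 (-1))
  have hS6 : S (X ⊞ X⟦(-1:ℤ)⟧) := hS.1.iso (biprod.braiding _ _) hS5
  exact hS.2 (X ⊞ X⟦(-1:ℤ)⟧) X (X⟦(-1:ℤ)⟧) biprod.inl biprod.snd 0 hS6
    (binaryBiproductTriangle_distinguished X (X⟦(-1:ℤ)⟧)) hL hG

/-- The main induction on the length of `X`. -/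
lemma keyInduction {S : C → Prop} (ht : IsTStr L G) (hS : TExactSub L G S) :
    ∀ (k : ℕ) (X Y : C), S (X ⊞ Y) → DLe L 0 X → DLe L 0 Y →
      ∀ m : ℤ, DGt G m X → DGt G m Y → -m ≤ (k : ℤ) → S X := by
  intro k
  induction k with
  | zero =>
      intro X Y hXY hLX hLY m hGX hGY hk
      have hGX0 : DGt G 0 X := DGt_mono ht (by omega) hGX
      have hz1 : IsZero (X⟦(0:ℤ)⟧) := by
        rw [IsZero.iff_id_eq_zero]
        exact ht.homZero hLX hGX0 _
      have hzX : IsZero X := hz1.of_iso (shiftZeroIso X).symm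
      exact hS.1.iso ((isZero_zero C).iso hzX) hS.1.zero
  | succ k ih =>
      intro X Y hXY hLX hLY m hGX hGY hk
      by_cases hmk : -m ≤ (k:ℤ)
      · exact ih X Y hXY hLX hLY m hGX hGY hmk
      have hm1 : m ≤ -1 := by omega
      obtain ⟨A₁, B₁, a₁, b₁, w₁, hT₁, hA₁, hB₁⟩ := ht.trunc (X⟦(-1:ℤ)⟧)
      obtain ⟨A₂, B₂, a₂, b₂, w₂, hT₂, hA₂, hB₂⟩ := ht.trunc (Y⟦(-1:ℤ)⟧)
      have hSum := biprodTriangle_distinguished (Triangle.mk a₁ b₁ w₁) (Triangle.mk a₂ b₂ w₂)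
        hT₁ hT₂
      have hSXY' : S (X⟦(-1:ℤ)⟧ ⊞ Y⟦(-1:ℤ)⟧) :=
        hS.1.iso (biprodShiftIso X Y (-1)) (hS.1.shift hXY (-1))
      have hLA : L (A₁ ⊞ A₂) :=
        ht.extL _ (binaryBiproductTriangle_distinguished A₁ A₂) hA₁ hA₂
      have hGB : G (B₁ ⊞ B₂) :=
        GExt ht _ (binaryBiproductTriangle_distinguished B₁ B₂) hB₁ hB₂
      have hSA : S (A₁ ⊞ A₂) :=
        hS.2 (X⟦(-1:ℤ)⟧ ⊞ Y⟦(-1:ℤ)⟧) (A₁ ⊞ A₂) (B₁ ⊞ B₂) _ _ _ hSXY' hSum hLA hGB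
      have hSB : S (B₁ ⊞ B₂) :=
        hS.1.ext _ (rot_of_distTriang _ hSum) hSXY' (hS.1.shift hSA 1)
      -- the aisle part, by induction
      have hLA0 : DLe L 0 A₁ := ht.isoL (shiftZeroIso A₁).symm hA₁
      have hLA0' : DLe L 0 A₂ := ht.isoL (shiftZeroIso A₂).symm hA₂
      have hGA : DGt G (m+1) A₁ := by
        apply GExt ht _ (Triangle.shift_distinguished _ (inv_rot_of_distTriang _ hT₁) (m+1))
        · exact ht.isoG (shiftIso' B₁ (-1) (m+1) m (by ring)).symm
            (DGt_mono ht hm1 (by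
              show G (B₁⟦(-1:ℤ)⟧)
              exact Gneg ht hB₁))
        · exact ht.isoG (shiftIso' X (-1) (m+1) m (by ring)).symm hGX
      have hGA' : DGt G (m+1) A₂ := by
        apply GExt ht _ (Triangle.shift_distinguished _ (inv_rot_of_distTriang _ hT₂) (m+1))
        · exact ht.isoG (shiftIso' B₂ (-1) (m+1) m (by ring)).symm
            (DGt_mono ht hm1 (by
              show G (B₂⟦(-1:ℤ)⟧)
              exact Gneg ht hB₂))
        · exact ht.isoG (shiftIso' Y (-1) (m+1) m (by ring)).symm hGY
      have hSA₁ : S A₁ := ih A₁ A₂ hSA hLA0 hLA0' (m+1) hGA hGA' (by omega)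
      -- the heart part, by the swindle
      have hLB1 : L (B₁⟦(1:ℤ)⟧) := by
        apply ht.extL _ (Triangle.shift_distinguished _ (rot_of_distTriang _ hT₁) 1)
        · exact ht.isoL (shiftIso' X (-1) 1 0 (by ring)).symm hLX
        · exact ht.shiftL (ht.shiftL hA₁)
      have hLB2 : L (B₂⟦(1:ℤ)⟧) := by
        apply ht.extL _ (Triangle.shift_distinguished _ (rot_of_distTriang _ hT₂) 1)
        · exact ht.isoL (shiftIso' Y (-1) 1 0 (by ring)).symm hLY
        · exact ht.shiftL (ht.shiftL hA₂)
      have hGB1 : G ((B₁⟦(1:ℤ)⟧)⟦(-1:ℤ)⟧) :=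
        ht.isoG (shiftIso' B₁ 1 (-1) 0 (by ring) ≪≫ shiftZeroIso B₁).symm hB₁
      have hSB1 : S (B₁⟦(1:ℤ)⟧ ⊞ B₂⟦(1:ℤ)⟧) :=
        hS.1.iso (biprodShiftIso B₁ B₂ 1) (hS.1.shift hSB 1)
      have hSB₁ : S (B₁⟦(1:ℤ)⟧) := heartSummand ht hS hSB1 hLB1 hGB1
      have hSB₁' : S B₁ :=
        hS.1.iso (shiftIso' B₁ 1 (-1) 0 (by ring) ≪≫ shiftZeroIso B₁) (hS.1.shift hSB₁ (-1))
      -- combine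
      have hSX' : S (X⟦(-1:ℤ)⟧) := hS.1.ext _ hT₁ hSA₁ hSB₁'
      exact hS.1.iso (shiftIso' X (-1) 1 0 (by ring) ≪≫ shiftZeroIso X) (hS.1.shift hSX' 1)

end TStructureLemmas

/-- A t-exact triangulated subcategory of a triangulated category with a
bounded t-structure is thick, i.e. closed under direct summands. -/
theorem statement2 (L G : C → Prop) (ht : IsTStr L G) (hb : BoundedTStr L G)
    (S : C → Prop) (hS : TExactSub L G S) :
    ∀ X Y : C, S (X ⊞ Y) → S X := by
  intro X Y hXY
  obtain ⟨⟨nX, hnX⟩, ⟨mX, hmX⟩⟩ := hb X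
  obtain ⟨⟨nY, hnY⟩, ⟨mY, hmY⟩⟩ := hb Y
  set n := max nX nY with hn
  set m := min mX mY with hm
  have hnX' : DLe L n X := DLe_mono ht (le_max_left _ _) hnX
  have hnY' : DLe L n Y := DLe_mono ht (le_max_right _ _) hnY
  have hmX' : DGt G m X := DGt_mono ht (min_le_left _ _) hmX
  have hmY' : DGt G m Y := DGt_mono ht (min_le_right _ _) hmY
  have hS' : S (X⟦n⟧ ⊞ Y⟦n⟧) := hS.1.iso (biprodShiftIso X Y n) (hS.1.shift hXY n)
  have hL0X : DLe L 0 (X⟦n⟧) := ht.isoL (shiftZeroIso (X⟦n⟧)).symm hnX'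
  have hL0Y : DLe L 0 (Y⟦n⟧) := ht.isoL (shiftZeroIso (Y⟦n⟧)).symm hnY'
  have hG0X : DGt G (m - n) (X⟦n⟧) := ht.isoG (shiftIso' X n (m-n) m (by ring)).symm hmX'
  have hG0Y : DGt G (m - n) (Y⟦n⟧) := ht.isoG (shiftIso' Y n (m-n) m (by ring)).symm hmY'
  have hSXn : S (X⟦n⟧) := keyInduction ht hS ((-(m-n)).toNat) (X⟦n⟧) (Y⟦n⟧) hS' hL0X hL0Y
    (m-n) hG0X hG0Y (Int.self_le_toNat _)
  exact hS.1.iso (shiftIso' X n (-n) 0 (by ring) ≪≫ shiftZeroIso X) (hS.1.shift hSXn (-n))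

end Paper
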